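/- Let Q be a finite set of vectors in R^n and i < j indices. Define the (i,j)-shift Q_{i,j} by replacing each v ∈ Q with v_{i,j} (the vector obtained by swapping coordinates i and j when v_i < v_j, and v itself otherwise) unless v_{i,j} already lies in Q, in which case v is retained. Then min{⟨v,w⟩ : v,w ∈ Q} ≤ min{⟨v',w'⟩ : v',w' ∈ Q_{i,j}}. -/
import Mathlib

/-- scalar product -/
def dot {n : ℕ} (v w : Fin n → ℝ) : ℝ := ∑ m, v m * w m

/-- the `(i,j)`-shift of a single vector: swap coordinates `i` and `j`
whenever `v i < v j`. -/
noncomputable def shiftVec {n : ℕ} (i j : Fin n) (v : Fin n → ℝ) : Fin n → ℝ :=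
  if v i < v j then v ∘ (Equiv.swap i j) else v

/-- the `(i,j)`-shift of a family of vectors. -/
def shiftFam {n : ℕ} (i j : Fin n) (Q : Set (Fin n → ℝ)) : Set (Fin n → ℝ) :=
  (shiftVec i j '' Q) ∪ {v ∈ Q | shiftVec i j v ∈ Q}

lemma dot_comm {n : ℕ} (v w : Fin n → ℝ) : dot v w = dot w v := by
  unfold dot; exact Finset.sum_congr rfl (fun m _ => mul_comm _ _)

lemma dswap {n : ℕ} (i j : Fin n) (hij : i ≠ j) (v w : Fin n → ℝ) :
    dot v (w ∘ Equiv.swap i j) = dot v w - (v i - v j) * (w i - w j) := by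
  have h : dot v w - dot v (w ∘ Equiv.swap i j)
      = ∑ m, (v m * w m - v m * w (Equiv.swap i j m)) := by
    unfold dot; rw [Finset.sum_sub_distrib]; rfl
  have h2 : ∑ m, (v m * w m - v m * w (Equiv.swap i j m))
      = ∑ m ∈ ({i, j} : Finset (Fin n)), (v m * w m - v m * w (Equiv.swap i j m)) := by
    refine (Finset.sum_subset (Finset.subset_univ _) ?_).symm
    intro k _ hk
    simp only [Finset.mem_insert, Finset.mem_singleton, not_or] at hk
    rw [Equiv.swap_apply_of_ne_of_ne hk.1 hk.2]; ring
  rw [Finset.sum_pair hij] at h2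
  rw [Equiv.swap_apply_left, Equiv.swap_apply_right] at h2
  have := h.trans h2
  linarith [this]

lemma dswap_left {n : ℕ} (i j : Fin n) (v w : Fin n → ℝ) :
    dot (v ∘ Equiv.swap i j) w = dot v (w ∘ Equiv.swap i j) := by
  unfold dot
  rw [show (∑ m, (v ∘ ⇑(Equiv.swap i j)) m * w m) = ∑ m, (fun k => v k * w (Equiv.swap i j k)) (Equiv.swap i j m) from Finset.sum_congr rfl (fun m _ => by simp)]
  rw [Equiv.sum_comp (Equiv.swap i j) (fun k => v k * w (Equiv.swap i j k))]
  rfl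

lemma dswap_both {n : ℕ} (i j : Fin n) (v w : Fin n → ℝ) :
    dot (v ∘ Equiv.swap i j) (w ∘ Equiv.swap i j) = dot v w := by
  unfold dot
  rw [← Equiv.sum_comp (Equiv.swap i j) (fun m => v m * w m)]
  rfl

lemma ineq1 {n : ℕ} (i j : Fin n) (hij : i ≠ j) (v w : Fin n → ℝ) :
    dot v w ≤ dot (shiftVec i j v) (shiftVec i j w) := by
  unfold shiftVec
  split_ifs with h1 h2 h2
  · rw [dswap_both]
  · rw [dswap_left, dswap i j hij]
    push_neg at h2; nlinarith
  · rw [dswap i j hij]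
    push_neg at h1; nlinarith
  · exact le_refl _

lemma ineq2 {n : ℕ} (i j : Fin n) (hij : i ≠ j) (v w : Fin n → ℝ) :
    dot v w ≤ dot (shiftVec i j v) w ∨ dot v (shiftVec i j w) ≤ dot (shiftVec i j v) w := by
  by_cases h1 : v i < v j
  · by_cases h2 : w i < w j
    · right; simp only [shiftVec, if_pos h1, if_pos h2]
      rw [dswap_left]
    · left; simp only [shiftVec, if_pos h1]
      rw [dswap_left, dswap i j hij]
      push_neg at h2; nlinarith
  · left; simp only [shiftVec, if_neg h1]; rfl

theorem stmt_7 (n : ℕ) (i j : Fin n) (hij : i < j)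
    (Q : Set (Fin n → ℝ)) (hQ : Q.Finite) :
    ∀ v' ∈ shiftFam i j Q, ∀ w' ∈ shiftFam i j Q,
      ∃ v ∈ Q, ∃ w ∈ Q, dot v w ≤ dot v' w' := by
  have hne : i ≠ j := ne_of_lt hij
  intro v' hv' w' hw'
  simp only [shiftFam, Set.mem_union, Set.mem_image, Set.mem_setOf_eq] at hv' hw'
  rcases hv' with ⟨a, ha, rfl⟩ | ⟨haQ, hsa⟩
  · rcases hw' with ⟨b, hb, rfl⟩ | ⟨hbQ, hsb⟩
    · exact ⟨a, ha, b, hb, ineq1 i j hne a b⟩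
    · rcases ineq2 i j hne a w' with h | h
      · exact ⟨a, ha, w', hbQ, h⟩
      · exact ⟨a, ha, shiftVec i j w', hsb, h⟩
  · rcases hw' with ⟨b, hb, rfl⟩ | ⟨hbQ, hsb⟩
    · rcases ineq2 i j hne b v' with h | h
      · exact ⟨v', haQ, b, hb, by rw [dot_comm v' b, dot_comm v' (shiftVec i j b)]; exact h⟩
      · exact ⟨shiftVec i j v', hsa, b, hb, by
          rw [dot_comm (shiftVec i j v') b, dot_comm v' (shiftVec i j b)]; exact h⟩
    · exact ⟨v', haQ, w', hbQ, le_refl _⟩
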